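/- For any finite simple graph Γ with n vertices, the characteristic polynomial over 𝔽₂ of its adjacency matrix equals ∑_{i=0}^{⌊n/2⌋} m_i · x^{n-2i}, where m_i is the number of i-matchings of Γ (sets of i pairwise non-incident edges), reduced mod 2. -/

import Mathlib

set_option linter.unusedSectionVars false

open Polynomial Finset Equiv

namespace MatchAux

variable {V : Type*} [Fintype V] [DecidableEq V]

/-- pairwise disjointness of a set of edges -/
def Disj (s : Finset (Sym2 V)) : Prop :=
  ∀ e ∈ s, ∀ f ∈ s, e ≠ f → ∀ v : V, ¬(v ∈ e ∧ v ∈ f)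

theorem Disj.eq {s : Finset (Sym2 V)} (hd : Disj s) {e f : Sym2 V} (he : e ∈ s) (hf : f ∈ s)
    {v : V} (hve : v ∈ e) (hvf : v ∈ f) : e = f := by
  by_contra h
  exact hd e he f hf h v ⟨hve, hvf⟩

/-- the function swapping endpoints of edges of `s` -/
noncomputable def matchFun (s : Finset (Sym2 V)) (v : V) : V :=
  if h : ∃ e ∈ s, v ∈ e then Sym2.Mem.other (Classical.choose_spec h).2 else v

theorem matchFun_of_not_mem {s : Finset (Sym2 V)} {v : V} (h : ∀ e ∈ s, v ∉ e) :
    matchFun s v = v := by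
  rw [matchFun, dif_neg]
  push_neg
  exact h

theorem matchFun_mk {s : Finset (Sym2 V)} (hd : Disj s) {a b : V} (h : s(a, b) ∈ s) :
    matchFun s a = b := by
  have hex : ∃ e ∈ s, a ∈ e := ⟨s(a, b), h, Sym2.mem_mk_left a b⟩
  rw [matchFun, dif_pos hex]
  have hspec := (Classical.choose_spec hex)
  have heq : Classical.choose hex = s(a, b) :=
    hd.eq hspec.1 h hspec.2 (Sym2.mem_mk_left a b)
  have ho := Sym2.other_spec hspec.2
  exact Sym2.congr_right.mp (ho.trans heq)

theorem matchFun_invol {s : Finset (Sym2 V)} (hd : Disj s) (v : V) :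
    matchFun s (matchFun s v) = v := by
  by_cases h : ∃ e ∈ s, v ∈ e
  · obtain ⟨e, hes, hve⟩ := h
    have hsp := Sym2.other_spec hve
    have h1 : matchFun s v = Sym2.Mem.other hve := by
      apply matchFun_mk hd; rw [hsp]; exact hes
    rw [h1]
    apply matchFun_mk hd
    rw [Sym2.eq_swap, hsp]; exact hes
  · push_neg at h
    rw [matchFun_of_not_mem h, matchFun_of_not_mem h]

/-- The permutation associated to a matching. -/
noncomputable def matchPerm (s : Finset (Sym2 V)) : Perm V := by
  classical
  exact if hd : Disj s then
    ⟨matchFun s, matchFun s, matchFun_invol hd, matchFun_invol hd⟩ else 1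

theorem matchPerm_apply {s : Finset (Sym2 V)} (hd : Disj s) (v : V) :
    matchPerm s v = matchFun s v := by
  rw [matchPerm]; rw [dif_pos hd]; rfl

/-- The matching associated to a permutation. -/
def permMatch (σ : Perm V) : Finset (Sym2 V) :=
  (univ.filter fun i => σ i ≠ i).image fun i => s(i, σ i)

theorem mem_permMatch {σ : Perm V} {e : Sym2 V} :
    e ∈ permMatch σ ↔ ∃ i, σ i ≠ i ∧ e = s(i, σ i) := by
  simp [permMatch, eq_comm]

end MatchAux

namespace MatchAux
set_option linter.unusedSectionVars false
variable {V : Type*} [Fintype V] [DecidableEq V]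

/-- endpoints of an unordered pair as a Finset -/
def eFinset : Sym2 V → Finset V :=
  Sym2.lift ⟨fun a b => {a, b}, fun a b => Finset.pair_comm a b⟩

@[simp] theorem mem_eFinset {v : V} {e : Sym2 V} : v ∈ eFinset e ↔ v ∈ e := by
  induction e using Sym2.inductionOn with
  | hf a b => simp [eFinset, Sym2.mem_iff]

theorem card_eFinset {e : Sym2 V} (h : ¬e.IsDiag) : (eFinset e).card = 2 := by
  induction e using Sym2.inductionOn with
  | hf a b =>
    rw [Sym2.mk_isDiag_iff] at h
    simp [eFinset, Finset.card_pair h]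

section Perm

variable {σ : Perm V} (hσ : σ * σ = 1)
include hσ

theorem perm_apply_apply (v : V) : σ (σ v) = v := by
  have := congrArg (fun τ : Perm V => τ v) hσ
  simpa using this

theorem mem_edge_cases {v i : V} (hi : σ i ≠ i) (hv : v ∈ s(i, σ i)) :
    s(v, σ v) = s(i, σ i) := by
  rw [Sym2.mem_iff] at hv
  rcases hv with rfl | rfl
  · rfl
  · rw [perm_apply_apply hσ, Sym2.eq_swap]

theorem disj_permMatch : Disj (permMatch σ) := by
  intro e he f hf hne v hv
  rw [mem_permMatch] at he hf
  obtain ⟨i, hi, rfl⟩ := he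
  obtain ⟨j, hj, rfl⟩ := hf
  exact hne ((mem_edge_cases hσ hi hv.1).symm.trans (mem_edge_cases hσ hj hv.2))

theorem not_fixed_of_mem {v i : V} (hi : σ i ≠ i) (hv : v ∈ s(i, σ i)) : σ v ≠ v := by
  rw [Sym2.mem_iff] at hv
  rcases hv with rfl | rfl
  · exact hi
  · rw [perm_apply_apply hσ]
    exact fun h => hi h.symm

theorem matchPerm_permMatch : matchPerm (permMatch σ) = σ := by
  have hd := disj_permMatch hσ
  ext v
  rw [matchPerm_apply hd]
  by_cases hv : σ v = v
  · rw [matchFun_of_not_mem]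
    · exact hv.symm
    · intro e he hve
      rw [mem_permMatch] at he
      obtain ⟨i, hi, rfl⟩ := he
      exact not_fixed_of_mem hσ hi hve hv
  · apply matchFun_mk hd
    rw [mem_permMatch]
    exact ⟨v, hv, rfl⟩

theorem support_eq_biUnion :
    σ.support = (permMatch σ).biUnion eFinset := by
  ext v
  simp only [Equiv.Perm.mem_support, Finset.mem_biUnion, mem_eFinset]
  constructor
  · intro hv
    exact ⟨s(v, σ v), mem_permMatch.mpr ⟨v, hv, rfl⟩, Sym2.mem_mk_left _ _⟩
  · rintro ⟨e, he, hve⟩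
    rw [mem_permMatch] at he
    obtain ⟨i, hi, rfl⟩ := he
    exact not_fixed_of_mem hσ hi hve

end Perm

theorem card_biUnion_eFinset {s : Finset (Sym2 V)} (hd : Disj s)
    (hnd : ∀ e ∈ s, ¬e.IsDiag) : (s.biUnion eFinset).card = 2 * s.card := by
  rw [Finset.card_biUnion, Finset.sum_congr rfl fun e he => card_eFinset (hnd e he)]
  · simp [mul_comm]
  · intro e he f hf hne
    simp only [Finset.disjoint_left, mem_eFinset]
    intro v hv hvf
    exact hd e he f hf hne v ⟨hv, hvf⟩

theorem card_support_eq {σ : Perm V} (hσ : σ * σ = 1)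
    (hnd : ∀ e ∈ permMatch σ, ¬e.IsDiag) :
    σ.support.card = 2 * (permMatch σ).card := by
  rw [support_eq_biUnion hσ, card_biUnion_eFinset (disj_permMatch hσ) hnd]


variable (G : SimpleGraph V) [DecidableRel G.Adj]

/-- permutations corresponding to matchings -/
def Good (σ : Perm V) : Prop := σ * σ = 1 ∧ ∀ i, σ i ≠ i → G.Adj (σ i) i

variable {G}

theorem permMatch_subset {σ : Perm V} (hg : Good G σ) : permMatch σ ⊆ G.edgeFinset := by
  intro e he
  rw [mem_permMatch] at he
  obtain ⟨i, hi, rfl⟩ := he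
  rw [SimpleGraph.mem_edgeFinset, SimpleGraph.mem_edgeSet]
  exact (hg.2 i hi).symm

theorem not_isDiag_of_subset {s : Finset (Sym2 V)} (hs : s ⊆ G.edgeFinset) :
    ∀ e ∈ s, ¬e.IsDiag := fun e he =>
  SimpleGraph.not_isDiag_of_mem_edgeSet G (SimpleGraph.mem_edgeFinset.mp (hs he))

theorem exists_mk_of_mem {e : Sym2 V} {v : V} (hve : v ∈ e) :
    ∃ w, e = s(v, w) := ⟨Sym2.Mem.other hve, (Sym2.other_spec hve).symm⟩

theorem good_matchPerm {s : Finset (Sym2 V)} (hs : s ⊆ G.edgeFinset) (hd : Disj s) :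
    Good G (matchPerm s) := by
  have key : ∀ v, matchPerm s v ≠ v → G.Adj (matchPerm s v) v ∧ ∃ e ∈ s, v ∈ e := by
    intro v hv
    rw [matchPerm_apply hd] at hv ⊢
    by_cases h : ∃ e ∈ s, v ∈ e
    · obtain ⟨e, hes, hve⟩ := h
      obtain ⟨w, rfl⟩ := exists_mk_of_mem hve
      have hw : matchFun s v = w := matchFun_mk hd hes
      rw [hw]
      have : G.Adj v w := (SimpleGraph.mem_edgeSet G).mp (SimpleGraph.mem_edgeFinset.mp (hs hes))
      exact ⟨this.symm, ⟨_, hes, hve⟩⟩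
    · push_neg at h
      exact absurd (matchFun_of_not_mem h) hv
  constructor
  · ext v
    simp only [Equiv.Perm.mul_apply, Equiv.Perm.one_apply]
    rw [matchPerm_apply hd, matchPerm_apply hd]
    exact matchFun_invol hd v
  · exact fun v hv => (key v hv).1

theorem permMatch_matchPerm {s : Finset (Sym2 V)} (hs : s ⊆ G.edgeFinset) (hd : Disj s) :
    permMatch (matchPerm s) = s := by
  ext e
  rw [mem_permMatch]
  constructor
  · rintro ⟨i, hi, rfl⟩
    rw [matchPerm_apply hd] at hi ⊢
    by_cases h : ∃ e ∈ s, i ∈ e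
    · obtain ⟨e, hes, hie⟩ := h
      obtain ⟨w, rfl⟩ := exists_mk_of_mem hie
      rw [matchFun_mk hd hes]
      exact hes
    · push_neg at h
      exact absurd (matchFun_of_not_mem h) hi
  · intro he
    have hnd := not_isDiag_of_subset hs e he
    induction e using Sym2.inductionOn with
    | hf a b => ?_
    have hab : a ≠ b := by rwa [Sym2.mk_isDiag_iff] at hnd; 
    have hfa : matchPerm s a = b := by rw [matchPerm_apply hd]; exact matchFun_mk hd he
    refine ⟨a, ?_, ?_⟩
    · rw [hfa]; exact fun h => hab h.symm
    · rw [hfa]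

theorem two_mul_card_le {s : Finset (Sym2 V)} (hs : s ⊆ G.edgeFinset) (hd : Disj s) :
    2 * s.card ≤ Fintype.card V := by
  rw [← card_biUnion_eFinset hd (not_isDiag_of_subset hs)]
  simpa using Finset.card_le_card (Finset.subset_univ _)


variable (G)

/-- The term of the permutation expansion of the characteristic polynomial. -/
noncomputable def F (σ : Perm V) : Polynomial (ZMod 2) :=
  ∏ i, if σ i = i then (X : Polynomial (ZMod 2)) else C (G.adjMatrix (ZMod 2) (σ i) i)

theorem charpoly_eq_sum_F : (G.adjMatrix (ZMod 2)).charpoly = ∑ σ : Perm V, F G σ := by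
  rw [Matrix.charpoly, Matrix.det_apply]
  refine Finset.sum_congr rfl fun σ _ => ?_
  have hu : ∀ (u : ℤˣ) (p : Polynomial (ZMod 2)), u • p = p := by
    intro u p
    rcases Int.units_eq_one_or u with rfl | rfl
    · simp
    · simp [Units.smul_def, CharTwo.neg_eq]
  rw [hu]
  refine Finset.prod_congr rfl fun i _ => ?_
  by_cases h : σ i = i
  · rw [if_pos h, h, Matrix.charmatrix_apply_eq]
    simp
  · rw [if_neg h, Matrix.charmatrix_apply_ne _ _ _ h, CharTwo.neg_eq]

theorem F_inv (σ : Perm V) : F G σ⁻¹ = F G σ := by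
  rw [F, F,
    ← Equiv.prod_comp σ
      (fun i => if σ⁻¹ i = i then (X : Polynomial (ZMod 2)) else C (G.adjMatrix (ZMod 2) (σ⁻¹ i) i))]
  refine Finset.prod_congr rfl fun i _ => ?_
  rw [show σ⁻¹ (σ i) = i from σ.symm_apply_apply i]
  by_cases h : σ i = i
  · simp [h]
  · rw [if_neg h, if_neg (fun hh => h hh.symm)]
    simp only [SimpleGraph.adjMatrix_apply]
    exact congrArg C (if_congr (G.adj_comm i (σ i)) rfl rfl)

theorem sum_F_eq : ∑ σ : Perm V, F G σ = ∑ σ ∈ univ.filter (fun σ : Perm V => σ * σ = 1), F G σ := by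
  classical
  rw [← Finset.sum_filter_add_sum_filter_not univ (fun σ : Perm V => σ * σ = 1)]
  have h0 : ∑ σ ∈ univ.filter (fun σ : Perm V => ¬σ * σ = 1), F G σ = 0 := by
    apply Finset.sum_involution (g := fun σ _ => σ⁻¹)
    · intro σ hσ
      rw [F_inv]
      exact CharTwo.add_self_eq_zero _
    · intro σ hσ _
      simp only [Finset.mem_filter] at hσ
      intro h
      apply hσ.2
      nth_rewrite 2 [← h]
      exact mul_inv_cancel σ
    · intro σ hσ
      exact inv_inv σ
    · intro σ hσ
      simp only [Finset.mem_filter, Finset.mem_univ, true_and] at hσ ⊢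
      intro h
      exact hσ (by simpa [mul_inv_rev] using congrArg Inv.inv h)
  rw [h0, add_zero]

theorem F_eq_ite (σ : Perm V) :
    F G σ = if (∀ i, σ i ≠ i → G.Adj (σ i) i)
      then (X : Polynomial (ZMod 2)) ^ (Fintype.card V - σ.support.card) else 0 := by
  rw [F, ← Finset.prod_mul_prod_compl σ.support]
  have h2 : ∏ i ∈ σ.supportᶜ,
      (if σ i = i then (X : Polynomial (ZMod 2)) else C (G.adjMatrix (ZMod 2) (σ i) i)) =
      X ^ (Fintype.card V - σ.support.card) := by
    rw [Finset.prod_congr rfl fun i hi => if_pos (by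
      simpa [Equiv.Perm.notMem_support] using Finset.mem_compl.mp hi)]
    rw [Finset.prod_const, Finset.card_compl]
  rw [h2]
  by_cases hadj : ∀ i, σ i ≠ i → G.Adj (σ i) i
  · rw [if_pos hadj]
    have h1 : ∏ i ∈ σ.support,
        (if σ i = i then (X : Polynomial (ZMod 2)) else C (G.adjMatrix (ZMod 2) (σ i) i)) = 1 := by
      apply Finset.prod_eq_one
      intro i hi
      have hne : σ i ≠ i := Equiv.Perm.mem_support.mp hi
      rw [if_neg hne]
      simp [SimpleGraph.adjMatrix_apply, hadj i hne]
    rw [h1, one_mul]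
  · rw [if_neg hadj]
    push_neg at hadj
    obtain ⟨i, hi, hna⟩ := hadj
    have : ∏ i ∈ σ.support,
        (if σ i = i then (X : Polynomial (ZMod 2)) else C (G.adjMatrix (ZMod 2) (σ i) i)) = 0 := by
      apply Finset.prod_eq_zero (Equiv.Perm.mem_support.mpr hi)
      rw [if_neg hi]
      simp [SimpleGraph.adjMatrix_apply, hna]
    rw [this, zero_mul]

end MatchAux

open MatchAux Equiv in


open Polynomial Finset in
/-- The characteristic polynomial over 𝔽₂ of the adjacency matrix of a finite simple
graph equals ∑_{i=0}^{⌊n/2⌋} mᵢ · x^(n-2i), where mᵢ is the number of i-matchings. -/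
theorem charpoly_adjMatrix_eq_sum_matchings
    {V : Type*} [Fintype V] [DecidableEq V] (G : SimpleGraph V) [DecidableRel G.Adj] :
    (G.adjMatrix (ZMod 2)).charpoly =
      ∑ i ∈ Finset.range (Fintype.card V / 2 + 1),
        (C ((Nat.card {s : Finset (Sym2 V) // s ⊆ G.edgeFinset ∧ s.card = i ∧
            ∀ e ∈ s, ∀ f ∈ s, e ≠ f → ∀ v : V, ¬(v ∈ e ∧ v ∈ f)} : ℕ) : ZMod 2)) *
          X ^ (Fintype.card V - 2 * i) := by
  classical
  set n := Fintype.card V with hn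
  set M : Finset (Finset (Sym2 V)) :=
    univ.filter (fun s : Finset (Sym2 V) => s ⊆ G.edgeFinset ∧ Disj s) with hM
  -- rewrite the right-hand side
  have hR : ∀ i : ℕ,
      (C ((Nat.card {s : Finset (Sym2 V) // s ⊆ G.edgeFinset ∧ s.card = i ∧
          ∀ e ∈ s, ∀ f ∈ s, e ≠ f → ∀ v : V, ¬(v ∈ e ∧ v ∈ f)} : ℕ) : ZMod 2)) *
        X ^ (n - 2 * i)
      = ∑ s ∈ M.filter (fun s => s.card = i), (X : Polynomial (ZMod 2)) ^ (n - 2 * s.card) := by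
    intro i
    have h1 : (Nat.card {s : Finset (Sym2 V) // s ⊆ G.edgeFinset ∧ s.card = i ∧
        ∀ e ∈ s, ∀ f ∈ s, e ≠ f → ∀ v : V, ¬(v ∈ e ∧ v ∈ f)} : ℕ)
        = (M.filter (fun s => s.card = i)).card := by
      rw [Nat.card_eq_fintype_card, Fintype.card_subtype, hM, Finset.filter_filter]
      congr 1
      ext s
      simp only [Finset.mem_filter, Finset.mem_univ, true_and]
      unfold Disj
      tauto
    rw [h1]
    rw [Finset.sum_congr rfl (fun s hs => by rw [(Finset.mem_filter.mp hs).2])]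
    rw [Finset.sum_const, nsmul_eq_mul, map_natCast]
  rw [Finset.sum_congr rfl fun i _ => hR i]
  rw [Finset.sum_fiberwise_of_maps_to (g := fun s : Finset (Sym2 V) => s.card)
    (fun s hs => by
      simp only [hM, Finset.mem_filter, Finset.mem_univ, true_and] at hs
      rw [Finset.mem_range, Nat.lt_succ_iff, Nat.le_div_iff_mul_le (by norm_num : 0 < 2)]
      rw [mul_comm]
      exact two_mul_card_le hs.1 hs.2)]
  -- rewrite the left-hand side
  rw [charpoly_eq_sum_F, sum_F_eq]
  rw [Finset.sum_congr rfl fun σ _ => F_eq_ite G σ]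
  rw [← Finset.sum_filter, Finset.filter_filter]
  -- the bijection
  apply Finset.sum_nbij' (i := permMatch) (j := matchPerm)
  · intro σ hσ
    simp only [Finset.mem_filter, Finset.mem_univ, true_and] at hσ
    simp only [hM, Finset.mem_filter, Finset.mem_univ, true_and]
    exact ⟨permMatch_subset ⟨hσ.1, hσ.2⟩, disj_permMatch hσ.1⟩
  · intro s hs
    simp only [hM, Finset.mem_filter, Finset.mem_univ, true_and] at hs
    simp only [Finset.mem_filter, Finset.mem_univ, true_and]
    exact good_matchPerm hs.1 hs.2
  · intro σ hσ
    simp only [Finset.mem_filter, Finset.mem_univ, true_and] at hσ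
    exact matchPerm_permMatch hσ.1
  · intro s hs
    simp only [hM, Finset.mem_filter, Finset.mem_univ, true_and] at hs
    exact permMatch_matchPerm hs.1 hs.2
  · intro σ hσ
    simp only [Finset.mem_filter, Finset.mem_univ, true_and] at hσ
    rw [card_support_eq hσ.1 (not_isDiag_of_subset (permMatch_subset ⟨hσ.1, hσ.2⟩))]
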